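/- Let E, F, P ∈ ℝ^{N×N} with P symmetric. If the block matrix M = [[E + Eᵀ - P, Fᵀ],[F, P]] is positive definite, then E is invertible and E⁻¹F is Schur stable. -/

import Mathlib

open Matrix
open scoped ComplexOrder

namespace Stmt13Aux

variable {N : ℕ}

lemma ctr (M : Matrix (Fin N) (Fin N) ℝ) : Mᴴ = Mᵀ :=
  conjTranspose_eq_transpose_of_trivial M

lemma block_left {A D : Matrix (Fin N) (Fin N) ℝ} {B C : Matrix (Fin N) (Fin N) ℝ}
    (hM : (fromBlocks A B C D).PosDef) : A.PosDef := by
  refine posDef_iff_dotProduct_mulVec.mpr ⟨?_, ?_⟩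
  · exact (isHermitian_fromBlocks_iff.mp hM.1).1
  · intro x hx
    have hv : (Sum.elim x (0 : Fin N → ℝ)) ≠ 0 := fun h => hx (funext fun i => congrFun h (Sum.inl i))
    have := hM.dotProduct_mulVec_pos hv
    simpa [fromBlocks_mulVec, sumElim_dotProduct_sumElim] using this

lemma block_right {A D : Matrix (Fin N) (Fin N) ℝ} {B C : Matrix (Fin N) (Fin N) ℝ}
    (hM : (fromBlocks A B C D).PosDef) : D.PosDef := by
  refine posDef_iff_dotProduct_mulVec.mpr ⟨?_, ?_⟩
  · exact (isHermitian_fromBlocks_iff.mp hM.1).2.2.2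
  · intro y hy
    have hv : (Sum.elim (0 : Fin N → ℝ) y) ≠ 0 := fun h => hy (funext fun i => congrFun h (Sum.inr i))
    have := hM.dotProduct_mulVec_pos hv
    simpa [fromBlocks_mulVec, sumElim_dotProduct_sumElim] using this

lemma posDef_conj {M : Matrix (Fin N) (Fin N) ℝ} (hM : M.PosDef) {B : Matrix (Fin N) (Fin N) ℝ}
    (hB : IsUnit B.det) : (Bᵀ * M * B).PosDef := by
  refine posDef_iff_dotProduct_mulVec.mpr ⟨?_, ?_⟩
  · have := isHermitian_conjTranspose_mul_mul B hM.1
    rwa [ctr] at this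
  · intro x hx
    have hBx : B *ᵥ x ≠ 0 := by
      intro h
      exact hx (mulVec_injective_iff_isUnit.mpr ((isUnit_iff_isUnit_det B).mpr hB)
        (by simpa using h))
    have := hM.dotProduct_mulVec_pos hBx
    simpa [← mulVec_mulVec, dotProduct_mulVec, vecMul_transpose] using this

lemma schur_pd {S F P : Matrix (Fin N) (Fin N) ℝ} (hP : P.PosDef)
    (hM : (fromBlocks S Fᵀ F P).PosDef) : (S - Fᵀ * P⁻¹ * F).PosDef := by
  haveI : Invertible P := hP.isUnit.invertible
  have hFH : (Fᵀ)ᴴ = F := by rw [ctr, transpose_transpose]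
  refine posDef_iff_dotProduct_mulVec.mpr ⟨?_, ?_⟩
  · refine ((isHermitian_fromBlocks_iff.mp hM.1).1).sub ?_
    have := isHermitian_conjTranspose_mul_mul F hP.1.inv
    rwa [ctr] at this
  · intro x hx
    set y : Fin N → ℝ := -((P⁻¹ * F) *ᵥ x) with hy
    have hv : Sum.elim x y ≠ 0 := fun h => hx (funext fun i => congrFun h (Sum.inl i))
    have h0 := hM.dotProduct_mulVec_pos hv
    have heq := schur_complement_eq₂₂ S Fᵀ x y hP.1
    rw [hFH] at heq
    rw [hy, add_neg_cancel] at heq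
    simp only [star_zero, zero_vecMul, zero_dotProduct, zero_add] at heq
    rw [dotProduct_mulVec] at h0 ⊢
    rw [heq] at h0
    exact h0

lemma map_dp (R : Matrix (Fin N) (Fin N) ℝ) (u v : Fin N → ℝ) :
    ((fun i => ((u i : ℝ) : ℂ)) ⬝ᵥ ((R.map Complex.ofReal) *ᵥ (fun i => ((v i : ℝ) : ℂ))))
      = ((u ⬝ᵥ (R *ᵥ v) : ℝ) : ℂ) := by
  simp only [dotProduct, mulVec, map_apply]
  push_cast
  rfl

lemma posDef_map {R : Matrix (Fin N) (Fin N) ℝ} (hR : R.PosDef) :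
    (R.map Complex.ofReal).PosDef := by
  have hsymm : Rᵀ = R := by have h : Rᴴ = R := hR.1; rwa [ctr] at h
  refine posDef_iff_dotProduct_mulVec.mpr ⟨?_, ?_⟩
  · ext i j
    simp only [conjTranspose_apply, map_apply]
    rw [show star ((R j i : ℝ) : ℂ) = ((R j i : ℝ) : ℂ) from Complex.conj_ofReal _]
    exact congrArg _ (congrFun (congrFun hsymm i) j)
  · intro x hx
    set a : Fin N → ℝ := fun i => (x i).re with ha
    set b : Fin N → ℝ := fun i => (x i).im with hb
    set ac : Fin N → ℂ := fun i => ((a i : ℝ) : ℂ) with hac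
    set bc : Fin N → ℂ := fun i => ((b i : ℝ) : ℂ) with hbc
    have hx2 : x = ac + Complex.I • bc := by
      funext i
      simp [hac, hbc, ha, hb, mul_comm]
      rw [mul_comm]
      exact (Complex.re_add_im (x i)).symm
    have hstar : star x = ac - Complex.I • bc := by
      funext i
      rw [hx2]
      simp [hac, hbc, Complex.ext_iff]
    have hcross : a ⬝ᵥ (R *ᵥ b) = b ⬝ᵥ (R *ᵥ a) := by
      rw [dotProduct_mulVec, ← mulVec_transpose, hsymm, dotProduct_comm]
    have hpos : 0 < a ⬝ᵥ (R *ᵥ a) + b ⬝ᵥ (R *ᵥ b) := by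
      rcases eq_or_ne a 0 with h1 | h1
      · have h2 : b ≠ 0 := by
          intro h2
          apply hx
          rw [hx2]
          funext i
          simp [hac, hbc, congrFun h1 i, congrFun h2 i]
        have := hR.dotProduct_mulVec_pos h2
        simp only [star_trivial] at this
        have h3 : a ⬝ᵥ (R *ᵥ a) = 0 := by simp [h1]
        linarith
      · have := hR.dotProduct_mulVec_pos h1
        simp only [star_trivial] at this
        have h4 := hR.posSemidef.dotProduct_mulVec_nonneg b
        simp only [star_trivial] at h4
        linarith
    have key : star x ⬝ᵥ ((R.map Complex.ofReal) *ᵥ x)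
        = ((a ⬝ᵥ (R *ᵥ a) + b ⬝ᵥ (R *ᵥ b) : ℝ) : ℂ) := by
      rw [hstar, hx2, mulVec_add, mulVec_smul, sub_dotProduct, dotProduct_add, dotProduct_add,
        dotProduct_smul, smul_dotProduct, smul_dotProduct, dotProduct_smul]
      rw [show ac ⬝ᵥ ((R.map Complex.ofReal) *ᵥ ac) = ((a ⬝ᵥ (R *ᵥ a) : ℝ) : ℂ) from map_dp R a a,
        show ac ⬝ᵥ ((R.map Complex.ofReal) *ᵥ bc) = ((a ⬝ᵥ (R *ᵥ b) : ℝ) : ℂ) from map_dp R a b,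
        show bc ⬝ᵥ ((R.map Complex.ofReal) *ᵥ ac) = ((b ⬝ᵥ (R *ᵥ a) : ℝ) : ℂ) from map_dp R b a,
        show bc ⬝ᵥ ((R.map Complex.ofReal) *ᵥ bc) = ((b ⬝ᵥ (R *ᵥ b) : ℝ) : ℂ) from map_dp R b b,
        hcross]
      push_cast
      simp only [smul_eq_mul]
      ring_nf
      rw [Complex.I_sq]
      ring
    rw [key]
    exact Complex.zero_lt_real.mpr hpos

lemma exists_eigvec {M : Matrix (Fin N) (Fin N) ℂ} {μ : ℂ} (h : μ ∈ spectrum ℂ M) :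
    ∃ v, v ≠ 0 ∧ M *ᵥ v = μ • v := by
  have h1 : ¬IsUnit (algebraMap ℂ (Matrix (Fin N) (Fin N) ℂ) μ - M) := spectrum.mem_iff.mp h
  have h2 : (algebraMap ℂ (Matrix (Fin N) (Fin N) ℂ) μ - M).det = 0 := by
    by_contra hd
    exact h1 ((isUnit_iff_isUnit_det _).mpr (isUnit_iff_ne_zero.mpr hd))
  obtain ⟨v, hv0, hv⟩ := (Matrix.exists_mulVec_eq_zero_iff).mpr h2
  refine ⟨v, hv0, ?_⟩
  have h3 : (algebraMap ℂ (Matrix (Fin N) (Fin N) ℂ) μ) *ᵥ v = μ • v := by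
    rw [Algebra.algebraMap_eq_smul_one, smul_mulVec, one_mulVec]
  rw [sub_mulVec, h3, sub_eq_zero] at hv
  exact hv.symm

lemma mapct (M : Matrix (Fin N) (Fin N) ℝ) : (M.map Complex.ofReal)ᴴ = Mᵀ.map Complex.ofReal := by
  ext i j
  simp only [conjTranspose_apply, map_apply, transpose_apply]
  exact Complex.conj_ofReal _

lemma map_sub' (X Y : Matrix (Fin N) (Fin N) ℝ) :
    (X - Y).map Complex.ofReal = X.map Complex.ofReal - Y.map Complex.ofReal := by
  ext i j; simp [map_apply]

lemma map_mul' (X Y : Matrix (Fin N) (Fin N) ℝ) :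
    (X * Y).map Complex.ofReal = X.map Complex.ofReal * Y.map Complex.ofReal := by
  ext i j
  simp only [map_apply, mul_apply]
  push_cast
  rfl

end Stmt13Aux

def SchurStable {N : ℕ} (A : Matrix (Fin N) (Fin N) ℝ) : Prop :=
  ∀ μ ∈ spectrum ℂ (A.map Complex.ofReal), ‖μ‖ < 1

theorem stmt13 {N : ℕ} (E F P : Matrix (Fin N) (Fin N) ℝ) (hPsymm : Pᵀ = P)
    (hM : (Matrix.fromBlocks (E + Eᵀ - P) Fᵀ F P).PosDef) :
    IsUnit E.det ∧ SchurStable (E⁻¹ * F) := by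
  have hP : P.PosDef := Stmt13Aux.block_right hM
  have hS : (E + Eᵀ - P).PosDef := Stmt13Aux.block_left hM
  have hPdet : IsUnit P.det := (Matrix.isUnit_iff_isUnit_det P).mp hP.isUnit
  have hEE : (E + Eᵀ).PosDef := by
    have := hS.add hP
    rwa [sub_add_cancel] at this
  have hEdet : IsUnit E.det := by
    rw [isUnit_iff_ne_zero]
    intro hd
    obtain ⟨v, hv, hv0⟩ := (Matrix.exists_mulVec_eq_zero_iff).mpr hd
    have hpos := hEE.dotProduct_mulVec_pos hv
    rw [star_trivial, add_mulVec, dotProduct_add, hv0, dotProduct_zero,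
      mulVec_transpose, dotProduct_comm, ← dotProduct_mulVec, hv0, dotProduct_zero] at hpos
    simp at hpos
  have hSchur : ((E + Eᵀ - P) - Fᵀ * P⁻¹ * F).PosDef := Stmt13Aux.schur_pd hP hM
  have hQ : (Eᵀ * P⁻¹ * E).PosDef := Stmt13Aux.posDef_conj hP.inv hEdet
  have h3 : P⁻¹ * P = 1 := Matrix.nonsing_inv_mul P hPdet
  have h4 : ∀ X : Matrix (Fin N) (Fin N) ℝ, P * (P⁻¹ * X) = X := fun X => by
    rw [← Matrix.mul_assoc, Matrix.mul_nonsing_inv P hPdet, Matrix.one_mul]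
  have key : Eᵀ * P⁻¹ * E - Fᵀ * P⁻¹ * F
      = (E - P)ᵀ * P⁻¹ * (E - P) + ((E + Eᵀ - P) - Fᵀ * P⁻¹ * F) := by
    simp only [transpose_sub, hPsymm, Matrix.sub_mul, Matrix.mul_sub, Matrix.mul_assoc, h3, h4,
      Matrix.mul_one]
    abel
  have hLyapR : (Eᵀ * P⁻¹ * E - Fᵀ * P⁻¹ * F).PosDef := by
    rw [key]
    refine Matrix.PosDef.posSemidef_add ?_ hSchur
    have := (hP.inv.posSemidef).conjTranspose_mul_mul_same (E - P)
    rwa [Stmt13Aux.ctr] at this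
  have hA : (E⁻¹ * F)ᵀ * (Eᵀ * P⁻¹ * E) * (E⁻¹ * F) = Fᵀ * P⁻¹ * F := by
    have h1 : (Eᵀ)⁻¹ * Eᵀ = 1 :=
      Matrix.nonsing_inv_mul _ (by simpa [Matrix.det_transpose] using hEdet)
    have h2 : E * (E⁻¹ * F) = F := by
      rw [← Matrix.mul_assoc, Matrix.mul_nonsing_inv E hEdet, Matrix.one_mul]
    rw [transpose_mul, transpose_nonsing_inv]
    calc Fᵀ * (Eᵀ)⁻¹ * (Eᵀ * P⁻¹ * E) * (E⁻¹ * F)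
        = Fᵀ * ((Eᵀ)⁻¹ * Eᵀ) * (P⁻¹ * (E * (E⁻¹ * F))) := by simp only [Matrix.mul_assoc]
      _ = Fᵀ * P⁻¹ * F := by rw [h1, h2, Matrix.mul_one, Matrix.mul_assoc]
  refine ⟨hEdet, ?_⟩
  intro μ hμ
  obtain ⟨v, hv, hv0⟩ := Stmt13Aux.exists_eigvec hμ
  have hQc : ((Eᵀ * P⁻¹ * E).map Complex.ofReal).PosDef := Stmt13Aux.posDef_map hQ
  have hLc : ((Eᵀ * P⁻¹ * E - Fᵀ * P⁻¹ * F).map Complex.ofReal).PosDef :=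
    Stmt13Aux.posDef_map hLyapR
  have hmapsub : (Eᵀ * P⁻¹ * E - Fᵀ * P⁻¹ * F).map Complex.ofReal
      = (Eᵀ * P⁻¹ * E).map Complex.ofReal
        - ((E⁻¹ * F).map Complex.ofReal)ᴴ * ((Eᵀ * P⁻¹ * E).map Complex.ofReal)
          * ((E⁻¹ * F).map Complex.ofReal) := by
    rw [← hA, show ((E⁻¹ * F).map Complex.ofReal)ᴴ = (E⁻¹ * F)ᵀ.map Complex.ofReal from
      Stmt13Aux.mapct _]
    simp only [Stmt13Aux.map_sub', Stmt13Aux.map_mul', transpose_mul]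
  have hpos := hLc.dotProduct_mulVec_pos hv
  rw [hmapsub] at hpos
  have hc := hQc.dotProduct_mulVec_pos hv
  set c : ℂ := star v ⬝ᵥ (((Eᵀ * P⁻¹ * E).map Complex.ofReal) *ᵥ v) with hcdef
  have hterm : star v ⬝ᵥ ((((E⁻¹ * F).map Complex.ofReal)ᴴ * ((Eᵀ * P⁻¹ * E).map Complex.ofReal)
      * ((E⁻¹ * F).map Complex.ofReal)) *ᵥ v) = (starRingEnd ℂ) μ * (μ * c) := by
    rw [← Matrix.mulVec_mulVec, ← Matrix.mulVec_mulVec, dotProduct_mulVec, ← star_mulVec, hv0,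
      mulVec_smul, star_smul, smul_dotProduct, dotProduct_smul, hcdef]
    simp [smul_eq_mul, mul_assoc]
  rw [sub_mulVec, dotProduct_sub, hterm] at hpos
  have hre : 0 < c.re ∧ (0 : ℂ).im = c.im := Complex.lt_def.mp hc
  have hceq : c = ((c.re : ℝ) : ℂ) := by
    apply Complex.ext
    · simp
    · simp [← hre.2]
  have hnorm : (starRingEnd ℂ) μ * μ = ((‖μ‖ ^ 2 : ℝ) : ℂ) := by
    rw [mul_comm, Complex.mul_conj]
    norm_cast
    rw [Complex.sq_norm]
  obtain ⟨r, hr0, hrc⟩ : ∃ r : ℝ, 0 < r ∧ c = ((r : ℝ) : ℂ) := ⟨c.re, hre.1, hceq⟩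
  rw [← hcdef] at hpos
  have heq2 : c - (starRingEnd ℂ) μ * (μ * c) = ((r - ‖μ‖ ^ 2 * r : ℝ) : ℂ) := by
    rw [show (starRingEnd ℂ) μ * (μ * c) = (starRingEnd ℂ) μ * μ * c from by ring, hnorm, hrc]
    push_cast
    ring
  rw [heq2] at hpos
  have hfin' : 0 < r - ‖μ‖ ^ 2 * r := Complex.zero_lt_real.mp hpos
  nlinarith [norm_nonneg μ, hr0, sq_nonneg (‖μ‖ - 1), sq_nonneg (‖μ‖ + 1)]
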